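/- With ρ₀, ρ₁ as in the two-party XOR sharing (ρ_b = (1/2) Σ_{r∈{0,1}} |ψ_{b,r}⟩⟨ψ_{b,r}|, |ψ_{b,r}⟩ = (1/√2)(|1⟩|b⊕r⟩ + |2⟩|r⟩)), the trace norm of ρ₀ − ρ₁ is at least 1; hence the optimal probability 1/2 + (1/4)·‖ρ₀−ρ₁‖_Tr of distinguishing ρ₀ from ρ₁ is at least 3/4. -/

import Mathlib

set_option maxHeartbeats 1000000

open scoped ComplexOrder MatrixOrder in
/-- The trace norm of a complex matrix: `Tr √(Mᴴ M)`, i.e. the sum of singular values. -/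
noncomputable def traceNorm {m n : Type*} [Fintype m] [Fintype n] [DecidableEq n]
    (M : Matrix m n ℂ) : ℝ :=
  ((CFC.sqrt (M.conjTranspose * M)).trace).re

/-- The state `|ψ_{b,r}⟩ = (1/√2)(|1⟩|b⊕r⟩ + |2⟩|r⟩)` of the two-party XOR sharing. -/
noncomputable def xorShareState (b r : Bool) : Bool × Bool → ℂ := fun p =>
  (Real.sqrt 2)⁻¹ *
    ((if p = (false, xor b r) then 1 else 0) + (if p = (true, r) then 1 else 0))

/-- The adversary's mixed state `ρ_b = (1/2) Σ_r |ψ_{b,r}⟩⟨ψ_{b,r}|`. -/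
noncomputable def xorShareDensity (b : Bool) : Matrix (Bool × Bool) (Bool × Bool) ℂ :=
  (2 : ℂ)⁻¹ • ∑ r : Bool,
    Matrix.of fun p q => xorShareState b r p * (starRingEnd ℂ) (xorShareState b r q)

lemma xorShare_diff_explicit : xorShareDensity false - xorShareDensity true =
    Matrix.of (fun p q : Bool × Bool =>
      if p.1 = q.1 then 0 else if p.2 = q.2 then (4:ℂ)⁻¹ else -(4:ℂ)⁻¹) := by
  have h2 : ((Real.sqrt 2 : ℝ) : ℂ)⁻¹ * ((Real.sqrt 2 : ℝ) : ℂ)⁻¹ = (2:ℂ)⁻¹ := by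
    rw [← mul_inv, ← Complex.ofReal_mul, Real.mul_self_sqrt (by norm_num)]; norm_num
  ext ⟨a, b⟩ ⟨c, d⟩
  rcases a <;> rcases b <;> rcases c <;> rcases d <;>
    simp [xorShareDensity, xorShareState, Matrix.sub_apply, Matrix.smul_apply,
      Matrix.sum_apply, Fintype.sum_bool, map_mul, map_add, mul_add, add_mul] <;>
    norm_num [h2]

open Matrix in
open scoped ComplexOrder MatrixOrder in
lemma xorShare_traceNorm_eq :
    traceNorm (xorShareDensity false - xorShareDensity true) = 1 := by
  set M := xorShareDensity false - xorShareDensity true with hMdef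
  have hMM : Mᴴ * M = Matrix.of (fun p q : Bool × Bool =>
      if p.1 = q.1 then (if p.2 = q.2 then (8:ℂ)⁻¹ else -(8:ℂ)⁻¹) else 0) := by
    rw [hMdef, xorShare_diff_explicit]
    ext ⟨a, b⟩ ⟨c, d⟩
    rcases a <;> rcases b <;> rcases c <;> rcases d <;>
      simp [Matrix.mul_apply, Matrix.conjTranspose_apply, Complex.conj_ofNat,
        Fintype.sum_prod_type, Fintype.sum_bool] <;> norm_num
  have hsqrt : (Mᴴ * M + Mᴴ * M) = CFC.sqrt (Mᴴ * M) := by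
    refine (CFC.sqrt_unique (b := Mᴴ * M + Mᴴ * M) ?_ ?_).symm
    rotate_left
    · exact Matrix.PosSemidef.nonneg <| (Matrix.posSemidef_conjTranspose_mul_self M).add
        (Matrix.posSemidef_conjTranspose_mul_self M)
    · rw [hMM]
      ext ⟨a, b⟩ ⟨c, d⟩
      rcases a <;> rcases b <;> rcases c <;> rcases d <;>
        simp [pow_two, Matrix.of_apply, Matrix.mul_apply, Matrix.add_apply,
          Fintype.sum_prod_type, Fintype.sum_bool] <;> norm_num
  rw [traceNorm, ← hsqrt, hMM]
  simp [Matrix.trace, Matrix.diag, Fintype.sum_prod_type, Fintype.sum_bool]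
  norm_num

/-- `‖ρ₀ − ρ₁‖_Tr ≥ 1`, hence the optimal distinguishing probability
`1/2 + (1/4)‖ρ₀ − ρ₁‖_Tr` is at least `3/4`. -/
theorem xorShare_distinguish :
    1 ≤ traceNorm (xorShareDensity false - xorShareDensity true) ∧
    (3 / 4 : ℝ) ≤
      1 / 2 + (1 / 4) * traceNorm (xorShareDensity false - xorShareDensity true) := by
  rw [xorShare_traceNorm_eq]
  norm_num
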